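/- For the sharpness example u(x,y) = y·w(r) with w(r) = |ln r|^{1/4} and r = √(x²+y²) on B_{1/2}⁺ ⊂ ℝ², the Laplacian f := Δu = (w''(r) + (3/r)·w'(r))·y satisfies f ∈ L²(B_{1/2}): there exists A₀ > 0 with (w'(r))² ≤ A₀/(r²|ln r|^{3/2}) and (w''(r))² ≤ A₀/(r⁴|ln r|^{3/2}) + A₀/(r⁴|ln r|^{7/2}) for r ∈ (0,1/2), and consequently ∫_{B_{1/2}} |f|² dx dy < ∞ (using polar coordinates and the substitution s = ln r). -/

import Mathlib

open MeasureTheory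

/-- `w(r) = |ln r|^{1/4} = (−ln r)^{1/4}` for `0 < r < 1/2`. -/
noncomputable def w15 (r : ℝ) : ℝ := (-Real.log r) ^ ((1:ℝ) / 4)

open Real Set Filter in
lemma L15_pos {r : ℝ} (h0 : 0 < r) (h1 : r < 1) : 0 < -Real.log r := by
  have := Real.log_neg h0 h1; linarith

open Real Set Filter in
lemma w15_hasDerivAt {r : ℝ} (h0 : 0 < r) (h1 : r < 1) :
    HasDerivAt w15 (-1/4 * r⁻¹ * (-Real.log r) ^ (-(3:ℝ)/4)) r := by
  have hL : 0 < -Real.log r := L15_pos h0 h1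
  have hlog : HasDerivAt (fun x : ℝ => -Real.log x) (-r⁻¹) r :=
    (Real.hasDerivAt_log h0.ne').neg
  have hr : HasDerivAt (fun y : ℝ => y ^ ((1:ℝ)/4))
      ((1/4) * (-Real.log r) ^ ((1:ℝ)/4 - 1)) (-Real.log r) :=
    Real.hasDerivAt_rpow_const (Or.inl hL.ne')
  have h := hr.comp r hlog
  have he : ((1:ℝ)/4 - 1) = (-(3:ℝ)/4) := by norm_num
  rw [he] at h
  refine h.congr_deriv ?_
  ring

open Real Set Filter in
lemma deriv_w15 {r : ℝ} (h0 : 0 < r) (h1 : r < 1) :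
    deriv w15 r = -1/4 * r⁻¹ * (-Real.log r) ^ (-(3:ℝ)/4) :=
  (w15_hasDerivAt h0 h1).deriv

open Real Set Filter in
lemma deriv2_w15 {r : ℝ} (h0 : 0 < r) (h1 : r < 1) :
    deriv (deriv w15) r =
      (1/4) * (r^2)⁻¹ * (-Real.log r) ^ (-(3:ℝ)/4)
        - (3/16) * (r^2)⁻¹ * (-Real.log r) ^ (-(7:ℝ)/4) := by
  have hL : 0 < -Real.log r := L15_pos h0 h1
  have hmem : Ioo (0:ℝ) 1 ∈ nhds r := isOpen_Ioo.mem_nhds ⟨h0, h1⟩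
  have heq : deriv w15 =ᶠ[nhds r]
      (fun x => -1/4 * x⁻¹ * (-Real.log x) ^ (-(3:ℝ)/4)) :=
    Filter.eventuallyEq_of_mem hmem (fun x hx => deriv_w15 hx.1 hx.2)
  rw [heq.deriv_eq]
  -- compute derivative of g
  have hu : HasDerivAt (fun x : ℝ => -1/4 * x⁻¹) (-1/4 * -(r^2)⁻¹) r :=
    (hasDerivAt_inv h0.ne').const_mul (-1/4)
  have hlog : HasDerivAt (fun x : ℝ => -Real.log x) (-r⁻¹) r :=
    (Real.hasDerivAt_log h0.ne').neg
  have hrp : HasDerivAt (fun y : ℝ => y ^ (-(3:ℝ)/4))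
      ((-(3:ℝ)/4) * (-Real.log r) ^ (-(3:ℝ)/4 - 1)) (-Real.log r) :=
    Real.hasDerivAt_rpow_const (Or.inl hL.ne')
  have hv : HasDerivAt (fun x : ℝ => (-Real.log x) ^ (-(3:ℝ)/4))
      ((-(3:ℝ)/4) * (-Real.log r) ^ (-(3:ℝ)/4 - 1) * -r⁻¹) r := by have := hrp.comp r hlog; exact this
  have h : deriv (fun x : ℝ => -1/4 * x⁻¹ * (-Real.log x) ^ (-(3:ℝ)/4)) r = _ := (hu.mul hv).deriv
  rw [h]
  have he : (-(3:ℝ)/4 - 1) = (-(7:ℝ)/4) := by norm_num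
  rw [he]
  have : (r^2)⁻¹ = r⁻¹ * r⁻¹ := by
    rw [sq, mul_inv]
  rw [this]
  ring

open Real Set Filter in
lemma abs_log15 {r : ℝ} (h0 : 0 < r) (h1 : r < 1) : |Real.log r| = -Real.log r :=
  abs_of_neg (Real.log_neg h0 h1)

open Real Set Filter in
lemma sq_rpow15 {L : ℝ} (hL : 0 < L) (c : ℝ) :
    (L ^ (-c/2)) ^ 2 = (L ^ c)⁻¹ := by
  rw [← Real.rpow_natCast (L ^ (-c/2)) 2, ← Real.rpow_mul hL.le, ← Real.rpow_neg hL.le]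
  norm_num

open Real Set Filter in
lemma bound1_15 {r : ℝ} (h0 : 0 < r) (h1 : r < 1) :
    (deriv w15 r) ^ 2 ≤ 1 / (r ^ 2 * |Real.log r| ^ ((3:ℝ) / 2)) := by
  have hL : 0 < -Real.log r := L15_pos h0 h1
  rw [deriv_w15 h0 h1, abs_log15 h0 h1]
  have ha2 : ((-Real.log r) ^ (-(3:ℝ)/4)) ^ 2 = ((-Real.log r) ^ ((3:ℝ)/2))⁻¹ := by
    have := sq_rpow15 hL ((3:ℝ)/2)
    rw [← this]; norm_num
  have hA : 0 < (-Real.log r) ^ ((3:ℝ)/2) := Real.rpow_pos_of_pos hL _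
  have hr2 : (0:ℝ) < r ^ 2 := by positivity
  rw [one_div, mul_inv]
  calc (-1/4 * r⁻¹ * (-Real.log r) ^ (-(3:ℝ)/4)) ^ 2
      = (1/16) * ((r^2)⁻¹ * (((-Real.log r) ^ (-(3:ℝ)/4))^2)) := by
        have h2 : (r^2)⁻¹ = r⁻¹ * r⁻¹ := by rw [sq, mul_inv]
        rw [h2]; ring
    _ ≤ (r^2)⁻¹ * (((-Real.log r) ^ (-(3:ℝ)/4))^2) := by
        have hnn : 0 ≤ (r^2)⁻¹ * (((-Real.log r) ^ (-(3:ℝ)/4))^2) := by positivity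
        linarith
    _ = (r^2)⁻¹ * ((-Real.log r) ^ ((3:ℝ)/2))⁻¹ := by rw [ha2]

open Real Set Filter in
lemma bound2_15 {r : ℝ} (h0 : 0 < r) (h1 : r < 1) :
    (deriv (deriv w15) r) ^ 2 ≤
      1 / (r ^ 4 * |Real.log r| ^ ((3:ℝ) / 2)) + 1 / (r ^ 4 * |Real.log r| ^ ((7:ℝ) / 2)) := by
  have hL : 0 < -Real.log r := L15_pos h0 h1
  rw [deriv2_w15 h0 h1, abs_log15 h0 h1]
  set a := (-Real.log r) ^ (-(3:ℝ)/4) with hadef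
  set b := (-Real.log r) ^ (-(7:ℝ)/4) with hbdef
  have ha2 : a ^ 2 = ((-Real.log r) ^ ((3:ℝ)/2))⁻¹ := by
    rw [hadef, ← sq_rpow15 hL ((3:ℝ)/2)]; norm_num
  have hb2 : b ^ 2 = ((-Real.log r) ^ ((7:ℝ)/2))⁻¹ := by
    rw [hbdef, ← sq_rpow15 hL ((7:ℝ)/2)]; norm_num
  have hab : 0 ≤ a * b := by
    apply mul_nonneg <;> exact Real.rpow_nonneg hL.le _
  have hr4 : (0:ℝ) < r ^ 4 := by positivity
  have key : ((1:ℝ)/4 * (r^2)⁻¹ * a - 3/16 * (r^2)⁻¹ * b) ^ 2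
      ≤ (r^4)⁻¹ * a^2 + (r^4)⁻¹ * b^2 := by
    have h24 : (r^4)⁻¹ = (r^2)⁻¹ * (r^2)⁻¹ := by
      rw [← mul_inv]; norm_num [← pow_add]
    rw [h24]
    have hrn : 0 ≤ (r^2)⁻¹ * (r^2)⁻¹ := by positivity
    nlinarith [mul_nonneg hrn hab, mul_nonneg hrn (sq_nonneg a), mul_nonneg hrn (sq_nonneg b)]
  calc ((1:ℝ)/4 * (r^2)⁻¹ * a - 3/16 * (r^2)⁻¹ * b) ^ 2
      ≤ (r^4)⁻¹ * a^2 + (r^4)⁻¹ * b^2 := key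
    _ = 1 / (r ^ 4 * (-Real.log r) ^ ((3:ℝ)/2)) + 1 / (r ^ 4 * (-Real.log r) ^ ((7:ℝ)/2)) := by
        rw [ha2, hb2, one_div, one_div, mul_inv, mul_inv]


open Real Set Filter Topology in
lemma intLog15 {s : ℝ} (hs : 1 < s) :
    IntegrableOn (fun r : ℝ => 1 / (r * (-Real.log r) ^ s)) (Ioo (0:ℝ) (1/2)) volume := by
  have hs1 : s - 1 ≠ 0 := by linarith
  have key : IntegrableOn (fun r : ℝ => 1 / (r * (-Real.log r) ^ s)) (Ioc (0:ℝ) (1/2)) volume := by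
    apply intervalIntegral.integrableOn_deriv_of_nonneg
      (g := fun r => (s - 1)⁻¹ * (-Real.log r) ^ (1 - s))
    · intro x hx
      rcases eq_or_ne x 0 with rfl | hx0
      · -- continuity within at 0
        have ht0 : Tendsto (fun r : ℝ => (s - 1)⁻¹ * (-Real.log r) ^ (1 - s))
            (nhdsWithin 0 (Ioi 0)) (nhds 0) := by
          have t1 : Tendsto (fun r : ℝ => -Real.log r) (nhdsWithin 0 (Ioi 0)) atTop :=
            tendsto_neg_atBot_atTop.comp Real.tendsto_log_nhdsGT_zero
          have t2 : Tendsto (fun y : ℝ => y ^ (1 - s)) atTop (nhds 0) := by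
            have h : (1 - s) = -(s - 1) := by ring
            rw [h]
            exact tendsto_rpow_neg_atTop (by linarith)
          have := (t2.comp t1).const_mul ((s - 1)⁻¹)
          simpa using this
        have hsplit : Icc (0:ℝ) (1/2) ⊆ {0} ∪ Ioi 0 := by
          intro y hy
          rcases eq_or_ne y 0 with rfl | hy0
          · exact Or.inl rfl
          · exact Or.inr (lt_of_le_of_ne hy.1 (Ne.symm hy0))
        apply ContinuousWithinAt.mono _ hsplit
        unfold ContinuousWithinAt
        rw [nhdsWithin_union, nhdsWithin_singleton]
        simp only [Real.log_zero, neg_zero, Real.zero_rpow (show (1:ℝ) - s ≠ 0 by linarith),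
          mul_zero]
        rw [Filter.tendsto_sup]
        constructor
        · simpa [Real.log_zero, Real.zero_rpow (show (1:ℝ) - s ≠ 0 by linarith)] using
            tendsto_pure_nhds (fun r : ℝ => (s - 1)⁻¹ * (-Real.log r) ^ (1 - s)) 0
        · exact ht0
      · have hx0' : 0 < x := lt_of_le_of_ne hx.1 (Ne.symm hx0)
        have hL : 0 < -Real.log x := L15_pos hx0' (by linarith [hx.2])
        apply ContinuousAt.continuousWithinAt
        have h3 : ContinuousAt (fun r : ℝ => (-Real.log r) ^ (1 - s)) x :=
          ((Real.continuousAt_log hx0).neg).rpow_const (Or.inl hL.ne')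
        exact continuousAt_const.mul h3
    · intro x hx
      have hL : 0 < -Real.log x := L15_pos hx.1 (by linarith [hx.2])
      have hlog : HasDerivAt (fun r : ℝ => -Real.log r) (-x⁻¹) x :=
        (Real.hasDerivAt_log hx.1.ne').neg
      have hrp : HasDerivAt (fun y : ℝ => y ^ (1 - s))
          ((1 - s) * (-Real.log x) ^ (1 - s - 1)) (-Real.log x) :=
        Real.hasDerivAt_rpow_const (Or.inl hL.ne')
      have h := ((hrp.comp x hlog).const_mul ((s - 1)⁻¹))
      refine h.congr_deriv ?_
      have he : (1 - s - 1) = -s := by ring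
      rw [he, Real.rpow_neg hL.le]
      have hxs : (-Real.log x) ^ s ≠ 0 := (Real.rpow_pos_of_pos hL s).ne'
      field_simp
      ring
    · intro x hx
      have hL : 0 < -Real.log x := L15_pos hx.1 (by linarith [hx.2])
      exact div_nonneg zero_le_one (mul_nonneg hx.1.le (Real.rpow_nonneg hL.le s))
  exact key.mono_set Ioo_subset_Ioc_self

open Real Set Filter Topology in
lemma bound3_15 {r t : ℝ} (h0 : 0 < r) (h1 : r < 1/2) (ht : t ^ 2 ≤ 1) :
    |r| * ((deriv (deriv w15) r + 3 / r * deriv w15 r) * (r * t)) ^ 2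
      ≤ 1 / (r * (-Real.log r) ^ ((3:ℝ)/2)) + 1 / (r * (-Real.log r) ^ ((7:ℝ)/2)) := by
  have h1' : r < 1 := by linarith
  have hL : 0 < -Real.log r := L15_pos h0 h1'
  rw [abs_of_pos h0, deriv_w15 h0 h1', deriv2_w15 h0 h1']
  set a := (-Real.log r) ^ (-(3:ℝ)/4) with hadef
  set b := (-Real.log r) ^ (-(7:ℝ)/4) with hbdef
  have ha2 : a ^ 2 = ((-Real.log r) ^ ((3:ℝ)/2))⁻¹ := by
    rw [hadef, ← sq_rpow15 hL ((3:ℝ)/2)]; norm_num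
  have hb2 : b ^ 2 = ((-Real.log r) ^ ((7:ℝ)/2))⁻¹ := by
    rw [hbdef, ← sq_rpow15 hL ((7:ℝ)/2)]; norm_num
  have ha0 : 0 ≤ a := Real.rpow_nonneg hL.le _
  have hb0 : 0 ≤ b := Real.rpow_nonneg hL.le _
  have e1 : 1 / (r * (-Real.log r) ^ ((3:ℝ)/2)) = r⁻¹ * a ^ 2 := by
    rw [ha2, one_div, mul_inv]
  have e2 : 1 / (r * (-Real.log r) ^ ((7:ℝ)/2)) = r⁻¹ * b ^ 2 := by
    rw [hb2, one_div, mul_inv]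
  rw [e1, e2]
  have hgoal : r * ((1/4 * (r^2)⁻¹ * a - 3/16 * (r^2)⁻¹ * b + 3 / r * (-1/4 * r⁻¹ * a))
        * (r * t)) ^ 2
      = r⁻¹ * (t ^ 2 * ((1/2) * a + 3/16 * b) ^ 2) := by
    field_simp
    ring
  rw [hgoal]
  have hc : ((1/2) * a + 3/16 * b) ^ 2 ≤ a ^ 2 + b ^ 2 := by
    nlinarith [sq_nonneg (a - b), mul_nonneg ha0 hb0]
  have hq : t ^ 2 * ((1/2) * a + 3/16 * b) ^ 2 ≤ a ^ 2 + b ^ 2 := by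
    calc t ^ 2 * ((1/2) * a + 3/16 * b) ^ 2
        ≤ 1 * ((1/2) * a + 3/16 * b) ^ 2 := mul_le_mul_of_nonneg_right ht (sq_nonneg _)
      _ = ((1/2) * a + 3/16 * b) ^ 2 := one_mul _
      _ ≤ a ^ 2 + b ^ 2 := hc
  calc r⁻¹ * (t ^ 2 * ((1/2) * a + 3/16 * b) ^ 2)
      ≤ r⁻¹ * (a ^ 2 + b ^ 2) := mul_le_mul_of_nonneg_left hq (inv_nonneg.mpr h0.le)
    _ = r⁻¹ * a ^ 2 + r⁻¹ * b ^ 2 := mul_add _ _ _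

theorem stmt15 :
    ∃ A₀ : ℝ, 0 < A₀ ∧
      (∀ r : ℝ, 0 < r → r < 1 / 2 →
        (deriv w15 r) ^ 2 ≤ A₀ / (r ^ 2 * |Real.log r| ^ ((3:ℝ) / 2)) ∧
        (deriv (deriv w15) r) ^ 2 ≤
          A₀ / (r ^ 4 * |Real.log r| ^ ((3:ℝ) / 2)) +
            A₀ / (r ^ 4 * |Real.log r| ^ ((7:ℝ) / 2))) ∧
      IntegrableOn
        (fun p : ℝ × ℝ =>
          ((deriv (deriv w15) (Real.sqrt (p.1 ^ 2 + p.2 ^ 2)) +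
              3 / Real.sqrt (p.1 ^ 2 + p.2 ^ 2) *
                deriv w15 (Real.sqrt (p.1 ^ 2 + p.2 ^ 2))) * p.2) ^ 2)
        {p : ℝ × ℝ | p.1 ^ 2 + p.2 ^ 2 < 1 / 4} volume := by
  refine ⟨1, one_pos, fun r h0 h1 => ⟨?_, ?_⟩, ?_⟩
  · simpa using bound1_15 h0 (by linarith)
  · simpa using bound2_15 h0 (by linarith)
  · -- integrability via polar coordinates
    set F : ℝ × ℝ → ℝ := fun p =>
      ((deriv (deriv w15) (Real.sqrt (p.1 ^ 2 + p.2 ^ 2)) +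
          3 / Real.sqrt (p.1 ^ 2 + p.2 ^ 2) *
            deriv w15 (Real.sqrt (p.1 ^ 2 + p.2 ^ 2))) * p.2) ^ 2 with hFdef
    have hFmeas : Measurable F := by
      have hsqrt : Continuous fun p : ℝ × ℝ => Real.sqrt (p.1 ^ 2 + p.2 ^ 2) :=
        Real.continuous_sqrt.comp ((continuous_fst.pow 2).add (continuous_snd.pow 2))
      have h1 : Measurable fun p : ℝ × ℝ => deriv (deriv w15) (Real.sqrt (p.1 ^ 2 + p.2 ^ 2)) :=
        (measurable_deriv (deriv w15)).comp hsqrt.measurable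
      have h2 : Measurable fun p : ℝ × ℝ => deriv w15 (Real.sqrt (p.1 ^ 2 + p.2 ^ 2)) :=
        (measurable_deriv w15).comp hsqrt.measurable
      have h3 : Measurable fun p : ℝ × ℝ => 3 / Real.sqrt (p.1 ^ 2 + p.2 ^ 2) :=
        measurable_const.div hsqrt.measurable
      exact (((h1.add (h3.mul h2)).mul measurable_snd).pow_const 2)
    set s2 : Set (ℝ × ℝ) := Set.Ioo (0:ℝ) (1/2) ×ˢ Set.Ioo (-Real.pi) Real.pi with hs2def
    have hs2 : MeasurableSet s2 := measurableSet_Ioo.prod measurableSet_Ioo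
    have hsubT : s2 ⊆ polarCoord.target := by
      rw [polarCoord_target]
      exact Set.prod_mono Set.Ioo_subset_Ioi_self subset_rfl
    have hinj : Set.InjOn polarCoord.symm s2 :=
      polarCoord.symm.injOn.mono (by rw [OpenPartialHomeomorph.symm_source]; exact hsubT)
    set B : ℝ × ℝ → (ℝ × ℝ) →L[ℝ] (ℝ × ℝ) := fun p =>
      LinearMap.toContinuousLinearMap (Matrix.toLin (Module.Basis.finTwoProd ℝ) (Module.Basis.finTwoProd ℝ)
        !![Real.cos p.2, -p.1 * Real.sin p.2; Real.sin p.2, p.1 * Real.cos p.2]) with hBdef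
    have hBdet : ∀ p, (B p).det = p.1 := by
      intro p
      conv_rhs => rw [← one_mul p.1, ← Real.cos_sq_add_sin_sq p.2]
      simp only [hBdef, neg_mul, LinearMap.det_toContinuousLinearMap, LinearMap.det_toLin,
        Matrix.det_fin_two_of, sub_neg_eq_add]
      ring
    have hder : ∀ q ∈ s2, HasFDerivWithinAt polarCoord.symm (B q) s2 q := fun q _ =>
      by have := (hasFDerivAt_polarCoord_symm q).hasFDerivWithinAt (s := s2); exact this
    have hiff := MeasureTheory.integrableOn_image_iff_integrableOn_abs_det_fderiv_smul
      volume hs2 hder hinj F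
    -- the transformed integrand
    have hrhs : IntegrableOn (fun q => |(B q).det| • F (polarCoord.symm q)) s2 volume := by
      set G : ℝ × ℝ → ℝ := fun q =>
        1 / (q.1 * (-Real.log q.1) ^ ((3:ℝ)/2)) + 1 / (q.1 * (-Real.log q.1) ^ ((7:ℝ)/2))
        with hGdef
      have hGint : IntegrableOn G s2 volume := by
        rw [IntegrableOn, hs2def, Measure.volume_eq_prod, ← Measure.prod_restrict]
        have hH : Integrable (fun r : ℝ =>
            1 / (r * (-Real.log r) ^ ((3:ℝ)/2)) + 1 / (r * (-Real.log r) ^ ((7:ℝ)/2)))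
            (volume.restrict (Set.Ioo (0:ℝ) (1/2))) :=
          (intLog15 (by norm_num)).add (intLog15 (by norm_num))
        have hone : Integrable (fun _ : ℝ => (1:ℝ))
            (volume.restrict (Set.Ioo (-Real.pi) Real.pi)) := by
          rw [← IntegrableOn]
          exact integrableOn_const measure_Ioo_lt_top.ne
        have := hH.mul_prod hone
        simpa [hGdef] using this
      apply hGint.integrable.mono'
      · -- a.e. strong measurability
        have hc : Continuous fun q : ℝ × ℝ => (q.1 * Real.cos q.2, q.1 * Real.sin q.2) :=
          (continuous_fst.mul (Real.continuous_cos.comp continuous_snd)).prodMk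
            (continuous_fst.mul (Real.continuous_sin.comp continuous_snd))
        have heq : (fun q => |(B q).det| • F (polarCoord.symm q))
            = fun q : ℝ × ℝ => |q.1| * F (q.1 * Real.cos q.2, q.1 * Real.sin q.2) := by
          funext q
          rw [hBdet, polarCoord_symm_apply, smul_eq_mul]
        rw [heq]
        exact ((measurable_fst.abs.mul (hFmeas.comp hc.measurable))).aestronglyMeasurable
      · -- a.e. bound
        filter_upwards [ae_restrict_mem hs2] with q hq
        obtain ⟨hq1, hq2⟩ := hq
        rw [hBdet, polarCoord_symm_apply, smul_eq_mul]
        have hr0 : 0 < q.1 := hq1.1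
        have hrr : (q.1 * Real.cos q.2) ^ 2 + (q.1 * Real.sin q.2) ^ 2 = q.1 ^ 2 := by
          rw [mul_pow, mul_pow, ← mul_add, Real.cos_sq_add_sin_sq, mul_one]
        have hsq : Real.sqrt ((q.1 * Real.cos q.2) ^ 2 + (q.1 * Real.sin q.2) ^ 2) = q.1 := by
          rw [hrr, Real.sqrt_sq hr0.le]
        have hFval : F (q.1 * Real.cos q.2, q.1 * Real.sin q.2)
            = ((deriv (deriv w15) q.1 + 3 / q.1 * deriv w15 q.1) * (q.1 * Real.sin q.2)) ^ 2 := by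
          rw [hFdef]
          simp only [hsq]
        rw [hFval]
        have hb := bound3_15 hr0 hq1.2 (Real.sin_sq_le_one q.2)
        have hnn : 0 ≤ |q.1| *
            ((deriv (deriv w15) q.1 + 3 / q.1 * deriv w15 q.1) * (q.1 * Real.sin q.2)) ^ 2 :=
          mul_nonneg (abs_nonneg _) (sq_nonneg _)
        rw [Real.norm_eq_abs, abs_of_nonneg hnn]
        exact hb
    have himg : IntegrableOn F (polarCoord.symm '' s2) volume := hiff.mpr hrhs
    -- null set of the x-axis
    set Z : Set (ℝ × ℝ) := {p : ℝ × ℝ | p.2 = 0} with hZdef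
    have hZ0 : volume Z = 0 := by
      have : Z = (Set.univ : Set ℝ) ×ˢ ({0} : Set ℝ) := by
        ext p
        simp only [hZdef, Set.mem_setOf_eq, Set.mem_prod, Set.mem_univ, true_and,
          Set.mem_singleton_iff]
      rw [this, Measure.volume_eq_prod, Measure.prod_prod]
      simp
    have hZint : IntegrableOn F Z volume := by
      rw [IntegrableOn, Measure.restrict_eq_zero.mpr hZ0]
      exact integrable_zero_measure
    have hsub : {p : ℝ × ℝ | p.1 ^ 2 + p.2 ^ 2 < 1 / 4} ⊆ polarCoord.symm '' s2 ∪ Z := by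
      intro p hp
      by_cases hp2 : p.2 = 0
      · exact Or.inr hp2
      · left
        have hsource : p ∈ polarCoord.source := by
          rw [polarCoord_source]
          exact Or.inr hp2
        refine ⟨polarCoord p, ?_, polarCoord.left_inv hsource⟩
        have htarget := polarCoord.map_source hsource
        rw [polarCoord_target] at htarget
        refine ⟨⟨htarget.1, ?_⟩, htarget.2⟩
        have h1 : (polarCoord p).1 = Real.sqrt (p.1 ^ 2 + p.2 ^ 2) := rfl
        rw [h1]
        rw [Real.sqrt_lt' (by norm_num : (0:ℝ) < 1/2)]
        calc p.1 ^ 2 + p.2 ^ 2 < 1/4 := hp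
          _ = (1/2 : ℝ) ^ 2 := by norm_num
    exact (himg.union hZint).mono_set hsub
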